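/- Let π be a partition with exactly s successive lower-Durfee squares. Then π has exactly s successive Durfee squares. -/

import Mathlib

/-- The side of the Durfee square of a partition whose parts are listed in
weakly decreasing order `L`: the number of indices `i` with `L[i] ≥ i+1`. -/
def durfee (L : List ℕ) : ℕ :=
  ((Finset.range L.length).filter fun i => i + 1 ≤ L.getD i 0).card

theorem durfee_le (L : List ℕ) : durfee L ≤ L.length := by
  classical
  calc ((Finset.range L.length).filter fun i => i + 1 ≤ L.getD i 0).card
      ≤ (Finset.range L.length).card := Finset.card_filter_le _ _
    _ = L.length := Finset.card_range _

/-- The sides of the successive Durfee squares (from the top) of a partition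
whose parts are listed in weakly decreasing order. -/
def durfeeSides (L : List ℕ) : List ℕ :=
  if h : durfee L = 0 then [] else durfee L :: durfeeSides (L.drop (durfee L))
  termination_by L.length
  decreasing_by
    have h1 := durfee_le L
    simp only [List.length_drop]
    omega

/-- The sides of the successive lower-Durfee squares (from the bottom) of a
partition whose parts are listed in weakly *increasing* order `M`: the first
lower-Durfee square has side `min M.head M.length`, and one recurses on the
remaining (larger) parts. -/
def lowerSides (M : List ℕ) : List ℕ :=
  if h : min (M.headD 0) M.length = 0 then []
  else min (M.headD 0) M.length :: lowerSides (M.drop (min (M.headD 0) M.length))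
  termination_by M.length
  decreasing_by
    simp only [List.length_drop]
    omega

/-! ### Auxiliary machinery -/

/-- A block `B` is "ok" if it is nonempty and every part is at least its length,
i.e. a `|B| × |B|` square fits in those rows. -/
def OkBlock (B : List ℕ) : Prop := B ≠ [] ∧ ∀ x ∈ B, B.length ≤ x

/-- `M` can be cut into `k` consecutive ok blocks. -/
def Blocks (M : List ℕ) (k : ℕ) : Prop :=
  ∃ P : List (List ℕ), P.flatten = M ∧ P.length = k ∧ ∀ B ∈ P, OkBlock B

lemma blocks_reverse {M : List ℕ} {k : ℕ} (h : Blocks M k) : Blocks M.reverse k := by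
  obtain ⟨P, hj, hl, hok⟩ := h
  refine ⟨(P.map List.reverse).reverse, ?_, by simp [hl], ?_⟩
  · rw [← hj, List.reverse_flatten]
  · intro B hB
    rw [List.mem_reverse, List.mem_map] at hB
    obtain ⟨C, hC, rfl⟩ := hB
    obtain ⟨h1, h2⟩ := hok C hC
    exact ⟨by simpa using h1, by simpa using h2⟩

lemma getD_drop' (l : List ℕ) (m i : ℕ) : (l.drop m).getD i 0 = l.getD (m + i) 0 := by
  simp [List.getD, List.getElem?_drop]

lemma headD_eq_getD (l : List ℕ) : l.headD 0 = l.getD 0 0 := by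
  cases l <;> simp [List.getD]

lemma sorted_ge_getD {l : List ℕ} (h : l.Pairwise (· ≥ ·)) {i j : ℕ} (hij : i ≤ j)
    (hj : j < l.length) : l.getD j 0 ≤ l.getD i 0 := by
  rw [l.getD_eq_getElem 0 (lt_of_le_of_lt hij hj), l.getD_eq_getElem 0 hj]
  exact List.Pairwise.rel_get_of_le h (by exact hij)

lemma sorted_le_getD {l : List ℕ} (h : l.Pairwise (· ≤ ·)) {i j : ℕ} (hij : i ≤ j)
    (hj : j < l.length) : l.getD i 0 ≤ l.getD j 0 := by
  rw [l.getD_eq_getElem 0 (lt_of_le_of_lt hij hj), l.getD_eq_getElem 0 hj]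
  exact List.Pairwise.rel_get_of_le h (by exact hij)

lemma headD_le_of_sorted {M : List ℕ} (h : M.Pairwise (· ≤ ·)) {x : ℕ} (hx : x ∈ M) :
    M.headD 0 ≤ x := by
  cases M with
  | nil => simp at hx
  | cons a t =>
    rcases List.mem_cons.1 hx with rfl | hx
    · simp
    · exact (List.pairwise_cons.1 h).1 x hx

/-! ### Unfolding lemmas -/

lemma lowerSides_nil {M : List ℕ} (h : min (M.headD 0) M.length = 0) : lowerSides M = [] := by
  rw [lowerSides, dif_pos h]

lemma lowerSides_cons {M : List ℕ} (h : min (M.headD 0) M.length ≠ 0) :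
    lowerSides M = min (M.headD 0) M.length :: lowerSides (M.drop (min (M.headD 0) M.length)) := by
  rw [lowerSides, dif_neg h]

lemma durfeeSides_nil {L : List ℕ} (h : durfee L = 0) : durfeeSides L = [] := by
  rw [durfeeSides, dif_pos h]

lemma durfeeSides_cons {L : List ℕ} (h : durfee L ≠ 0) :
    durfeeSides L = durfee L :: durfeeSides (L.drop (durfee L)) := by
  rw [durfeeSides, dif_neg h]

lemma lowerSides_nil' : lowerSides [] = [] := lowerSides_nil (by simp)

lemma durfee_nil : durfee [] = 0 := by simp [durfee]

lemma durfeeSides_nil' : durfeeSides [] = [] := durfeeSides_nil durfee_nil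

/-! ### Basic durfee lemmas -/

lemma le_durfee {L : List ℕ} {b : ℕ} (hb : b ≤ L.length)
    (h : ∀ i < b, i + 1 ≤ L.getD i 0) : b ≤ durfee L := by
  classical
  have hsub : Finset.range b ⊆ (Finset.range L.length).filter fun i => i + 1 ≤ L.getD i 0 := by
    intro i hi
    rw [Finset.mem_range] at hi
    exact Finset.mem_filter.2 ⟨Finset.mem_range.2 (lt_of_lt_of_le hi hb), h i hi⟩
  calc b = (Finset.range b).card := (Finset.card_range b).symm
    _ ≤ _ := Finset.card_le_card hsub

lemma durfee_getD {L : List ℕ} (hsort : L.Pairwise (· ≥ ·)) {i : ℕ} (hi : i < durfee L) :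
    i + 1 ≤ L.getD i 0 := by
  classical
  by_contra hni
  have hsub : ((Finset.range L.length).filter fun j => j + 1 ≤ L.getD j 0) ⊆ Finset.range i := by
    intro j hj
    rw [Finset.mem_filter, Finset.mem_range] at hj
    rw [Finset.mem_range]
    by_contra hji
    push_neg at hji
    have h1 : L.getD j 0 ≤ L.getD i 0 := sorted_ge_getD hsort hji hj.1
    omega
  have := Finset.card_le_card hsub
  rw [Finset.card_range] at this
  unfold durfee at hi
  omega

lemma durfee_pos {L : List ℕ} (hpos : ∀ x ∈ L, 1 ≤ x) (hne : L ≠ []) : 1 ≤ durfee L := by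
  apply le_durfee
  · rcases L with _ | ⟨a, t⟩
    · exact absurd rfl hne
    · simp
  · intro i hi
    have : i = 0 := by omega
    subst this
    rcases L with _ | ⟨a, t⟩
    · exact absurd rfl hne
    · simpa [List.getD] using hpos a (by simp)

/-! ### Greedy achieves a block decomposition -/

lemma lower_blocks : ∀ (n : ℕ) (M : List ℕ), M.length ≤ n → M.Pairwise (· ≤ ·) →
    (∀ x ∈ M, 1 ≤ x) → Blocks M (lowerSides M).length := by
  intro n
  induction n with
  | zero =>
    intro M hlen _ _
    have : M = [] := List.eq_nil_of_length_eq_zero (by omega)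
    subst this
    rw [lowerSides_nil']
    exact ⟨[], rfl, rfl, by simp⟩
  | succ n ih =>
    intro M hlen hsort hpos
    set b := min (M.headD 0) M.length with hbdef
    by_cases hb : b = 0
    · have hM : M = [] := by
        rcases M with _ | ⟨a, t⟩
        · rfl
        · have : 1 ≤ a := hpos a (by simp)
          simp [hbdef] at hb
          omega
      subst hM
      rw [lowerSides_nil']
      exact ⟨[], rfl, rfl, by simp⟩
    · rw [lowerSides_cons hb]
      have hb1 : 1 ≤ b := Nat.one_le_iff_ne_zero.2 hb
      have hble : b ≤ M.length := min_le_right _ _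
      obtain ⟨P, hj, hl, hok⟩ := ih (M.drop b) (by rw [List.length_drop]; omega) hsort.drop
        (fun x hx => hpos x (List.mem_of_mem_drop hx))
      refine ⟨M.take b :: P, ?_, ?_, ?_⟩
      · rw [List.flatten_cons, hj, List.take_append_drop]
      · simp only [List.length_cons]
        rw [hl, hbdef]
      · intro B hB
        rcases List.mem_cons.1 hB with rfl | hB
        · constructor
          · intro hemp
            have := congrArg List.length hemp
            rw [List.length_take] at this
            simp only [List.length_nil] at this
            omega
          · intro x hx
            have hxM : x ∈ M := List.mem_of_mem_take hx
            have h1 : M.headD 0 ≤ x := headD_le_of_sorted hsort hxM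
            have h2 : (M.take b).length = b := by rw [List.length_take]; omega
            rw [h2]
            exact le_trans (min_le_left _ _) h1
        · exact hok B hB

lemma durfee_blocks : ∀ (n : ℕ) (L : List ℕ), L.length ≤ n → L.Pairwise (· ≥ ·) →
    (∀ x ∈ L, 1 ≤ x) → Blocks L (durfeeSides L).length := by
  intro n
  induction n with
  | zero =>
    intro L hlen _ _
    have : L = [] := List.eq_nil_of_length_eq_zero (by omega)
    subst this
    rw [durfeeSides_nil']
    exact ⟨[], rfl, rfl, by simp⟩
  | succ n ih =>
    intro L hlen hsort hpos
    by_cases hd : durfee L = 0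
    · have hL : L = [] := by
        by_contra hne
        have := durfee_pos hpos hne
        omega
      subst hL
      rw [durfeeSides_nil']
      exact ⟨[], rfl, rfl, by simp⟩
    · set d := durfee L with hddef
      rw [durfeeSides_cons hd]
      have hd1 : 1 ≤ d := Nat.one_le_iff_ne_zero.2 hd
      have hdle : d ≤ L.length := durfee_le L
      obtain ⟨P, hj, hl, hok⟩ := ih (L.drop d) (by rw [List.length_drop]; omega) hsort.drop
        (fun x hx => hpos x (List.mem_of_mem_drop hx))
      refine ⟨L.take d :: P, ?_, ?_, ?_⟩
      · rw [List.flatten_cons, hj, List.take_append_drop]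
      · simp only [List.length_cons]
        rw [hl, hddef]
      · intro B hB
        rcases List.mem_cons.1 hB with rfl | hB
        · have htl : (L.take d).length = d := by rw [List.length_take]; omega
          constructor
          · intro hemp
            have := congrArg List.length hemp
            rw [htl] at this
            simp only [List.length_nil] at this
            omega
          · intro x hx
            rw [htl]
            obtain ⟨i, hi, hix⟩ := List.mem_iff_getElem.1 hx
            rw [htl] at hi
            have hix' : L[i]'(by omega) = x := by
              rw [← hix, List.getElem_take]
            have h1 : L.getD (d-1) 0 ≤ L.getD i 0 := sorted_ge_getD hsort (by omega) (by omega)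
            have h2 : (d-1) + 1 ≤ L.getD (d-1) 0 := durfee_getD hsort (by omega)
            have h3 : L.getD i 0 = x := by
              rw [L.getD_eq_getElem 0 (by omega : i < L.length), hix']
            omega
        · exact hok B hB

/-! ### Greedy count is monotone under `drop` -/

lemma lower_drop_le : ∀ (n : ℕ) (M : List ℕ), M.length ≤ n → M.Pairwise (· ≤ ·) →
    (∀ x ∈ M, 1 ≤ x) → ∀ m : ℕ, (lowerSides (M.drop m)).length ≤ (lowerSides M).length := by
  intro n
  induction n with
  | zero =>
    intro M hlen _ _ m
    have : M = [] := List.eq_nil_of_length_eq_zero (by omega)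
    subst this
    simp
  | succ n ih =>
    intro M hlen hsort hpos m
    set b := min (M.headD 0) M.length with hbdef
    by_cases hb : b = 0
    · have hM : M = [] := by
        rcases M with _ | ⟨a, t⟩
        · rfl
        · have : 1 ≤ a := hpos a (by simp)
          simp [hbdef] at hb
          omega
      subst hM
      simp
    · have hb1 : 1 ≤ b := Nat.one_le_iff_ne_zero.2 hb
      have hble : b ≤ M.length := min_le_right _ _
      have hbh : b ≤ M.headD 0 := min_le_left _ _
      have hds : (M.drop b).Pairwise (· ≤ ·) := hsort.drop
      have hdp : ∀ x ∈ M.drop b, 1 ≤ x := fun x hx => hpos x (List.mem_of_mem_drop hx)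
      have hdl : (M.drop b).length ≤ n := by rw [List.length_drop]; omega
      have hM : (lowerSides M).length = (lowerSides (M.drop b)).length + 1 := by
        rw [lowerSides_cons hb, List.length_cons]
      rcases Nat.lt_or_ge m b with hmb | hmb
      · -- m < b
        rcases Nat.eq_zero_or_pos m with rfl | hm1
        · simp
        set N := M.drop m with hNdef
        have hNlen : N.length = M.length - m := by rw [hNdef, List.length_drop]
        set b' := min (N.headD 0) N.length with hb'def
        have hNh : N.headD 0 = M.getD m 0 := by
          rw [headD_eq_getD, hNdef, getD_drop', Nat.add_zero]
        have hmh : M.headD 0 ≤ M.getD m 0 := by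
          rw [headD_eq_getD]
          exact sorted_le_getD hsort (Nat.zero_le m) (by omega)
        have hb'ge : b - m ≤ b' := by
          apply le_min
          · rw [hNh]; omega
          · omega
        have hb'0 : b' ≠ 0 := by omega
        have hN : (lowerSides N).length = (lowerSides (N.drop b')).length + 1 := by
          rw [lowerSides_cons hb'0, List.length_cons]
        have hdd : N.drop b' = (M.drop b).drop (m + b' - b) := by
          rw [hNdef, List.drop_drop, List.drop_drop]
          congr 1
          omega
        rw [hM, hN, hdd]
        have := ih (M.drop b) hdl hds hdp (m + b' - b)
        omega
      · -- b ≤ m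
        have hdd : M.drop m = (M.drop b).drop (m - b) := by
          rw [List.drop_drop]
          congr 1
          omega
        rw [hM, hdd]
        have := ih (M.drop b) hdl hds hdp (m - b)
        omega

lemma durfee_drop_le : ∀ (n : ℕ) (L : List ℕ), L.length ≤ n → L.Pairwise (· ≥ ·) →
    (∀ x ∈ L, 1 ≤ x) → ∀ m : ℕ, (durfeeSides (L.drop m)).length ≤ (durfeeSides L).length := by
  intro n
  induction n with
  | zero =>
    intro L hlen _ _ m
    have : L = [] := List.eq_nil_of_length_eq_zero (by omega)
    subst this
    simp
  | succ n ih =>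
    intro L hlen hsort hpos m
    by_cases hL : L = []
    · subst hL; simp
    set d := durfee L with hddef
    have hd1 : 1 ≤ d := durfee_pos hpos hL
    have hdle : d ≤ L.length := durfee_le L
    have hds : (L.drop d).Pairwise (· ≥ ·) := hsort.drop
    have hdp : ∀ x ∈ L.drop d, 1 ≤ x := fun x hx => hpos x (List.mem_of_mem_drop hx)
    have hdl : (L.drop d).length ≤ n := by rw [List.length_drop]; omega
    have hLc : (durfeeSides L).length = (durfeeSides (L.drop d)).length + 1 := by
      rw [durfeeSides_cons (by omega), List.length_cons]
    rcases Nat.lt_or_ge m d with hmd | hmd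
    · rcases Nat.eq_zero_or_pos m with rfl | hm1
      · simp
      set N := L.drop m with hNdef
      have hNlen : N.length = L.length - m := by rw [hNdef, List.length_drop]
      set d' := durfee N with hd'def
      have hd'ge : d - m ≤ d' := by
        apply le_durfee
        · omega
        · intro i hi
          rw [hNdef, getD_drop']
          have := durfee_getD hsort (show m + i < d by omega)
          omega
      have hN : (durfeeSides N).length = (durfeeSides (N.drop d')).length + 1 := by
        rw [durfeeSides_cons (by omega), List.length_cons]
      have hdd : N.drop d' = (L.drop d).drop (m + d' - d) := by
        rw [hNdef, List.drop_drop, List.drop_drop]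
        congr 1
        omega
      rw [hLc, hN, hdd]
      have := ih (L.drop d) hdl hds hdp (m + d' - d)
      omega
    · have hdd : L.drop m = (L.drop d).drop (m - d) := by
        rw [List.drop_drop]
        congr 1
        omega
      rw [hLc, hdd]
      have := ih (L.drop d) hdl hds hdp (m - d)
      omega

/-! ### Greedy is optimal -/

lemma lower_min : ∀ (n : ℕ) (M : List ℕ), M.length ≤ n → M.Pairwise (· ≤ ·) →
    (∀ x ∈ M, 1 ≤ x) → ∀ k, Blocks M k → (lowerSides M).length ≤ k := by
  intro n
  induction n with
  | zero =>
    intro M hlen _ _ k _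
    have : M = [] := List.eq_nil_of_length_eq_zero (by omega)
    subst this
    simp [lowerSides_nil']
  | succ n ih =>
    intro M hlen hsort hpos k hk
    obtain ⟨P, hj, hl, hok⟩ := hk
    rcases P with _ | ⟨B, P'⟩
    · simp at hj
      subst hj
      simp [lowerSides_nil']
    · obtain ⟨hBne, hBok⟩ := hok B (by simp)
      set b0 := B.length with hb0def
      have hb01 : 1 ≤ b0 := by
        rcases B with _ | ⟨a, t⟩
        · exact absurd rfl hBne
        · simp [hb0def]
      have hMeq : M = B ++ P'.flatten := by rw [← hj, List.flatten_cons]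
      have hlen0 : b0 ≤ M.length := by rw [hMeq, List.length_append]; omega
      have hb0h : b0 ≤ M.headD 0 := by
        rcases B with _ | ⟨a, t⟩
        · exact absurd rfl hBne
        · have : M.headD 0 = a := by rw [hMeq]; rfl
          rw [this]
          exact hBok a (by simp)
      set b := min (M.headD 0) M.length with hbdef
      have hb0b : b0 ≤ b := le_min hb0h hlen0
      have hb1 : 1 ≤ b := by omega
      have hM : (lowerSides M).length = (lowerSides (M.drop b)).length + 1 := by
        rw [lowerSides_cons (by omega), List.length_cons]
      have hdropb0 : M.drop b0 = P'.flatten := by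
        rw [hMeq, hb0def, List.drop_left]
      have hds : (M.drop b0).Pairwise (· ≤ ·) := hsort.drop
      have hdp : ∀ x ∈ M.drop b0, 1 ≤ x := fun x hx => hpos x (List.mem_of_mem_drop hx)
      have hdl : (M.drop b0).length ≤ n := by rw [List.length_drop]; omega
      have hBl : Blocks (M.drop b0) P'.length :=
        ⟨P', hdropb0.symm, rfl, fun C hC => hok C (by simp [hC])⟩
      have h1 : (lowerSides (M.drop b0)).length ≤ P'.length := ih _ hdl hds hdp _ hBl
      have hdd : M.drop b = (M.drop b0).drop (b - b0) := by
        rw [List.drop_drop]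
        congr 1
        omega
      have h2 : (lowerSides (M.drop b)).length ≤ (lowerSides (M.drop b0)).length := by
        rw [hdd]
        exact lower_drop_le n (M.drop b0) hdl hds hdp (b - b0)
      have hk' : k = P'.length + 1 := by rw [List.length_cons] at hl; omega
      omega

lemma durfee_min : ∀ (n : ℕ) (L : List ℕ), L.length ≤ n → L.Pairwise (· ≥ ·) →
    (∀ x ∈ L, 1 ≤ x) → ∀ k, Blocks L k → (durfeeSides L).length ≤ k := by
  intro n
  induction n with
  | zero =>
    intro L hlen _ _ k _
    have : L = [] := List.eq_nil_of_length_eq_zero (by omega)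
    subst this
    simp [durfeeSides_nil']
  | succ n ih =>
    intro L hlen hsort hpos k hk
    obtain ⟨P, hj, hl, hok⟩ := hk
    rcases P with _ | ⟨B, P'⟩
    · simp at hj
      subst hj
      simp [durfeeSides_nil']
    · obtain ⟨hBne, hBok⟩ := hok B (by simp)
      set b0 := B.length with hb0def
      have hb01 : 1 ≤ b0 := by
        rcases B with _ | ⟨a, t⟩
        · exact absurd rfl hBne
        · simp [hb0def]
      have hMeq : L = B ++ P'.flatten := by rw [← hj, List.flatten_cons]
      have hlen0 : b0 ≤ L.length := by rw [hMeq, List.length_append]; omega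
      have hb0d : b0 ≤ durfee L := by
        apply le_durfee hlen0
        intro i hi
        have hiB : i < B.length := by omega
        have hgd : L.getD i 0 = B.getD i 0 := by
          rw [hMeq]
          simp [List.getD, List.getElem?_append_left hiB]
        have hBg : B.getD i 0 = B[i] := B.getD_eq_getElem 0 hiB
        have := hBok (B[i]) (List.getElem_mem hiB)
        omega
      set d := durfee L with hddef
      have hd1 : 1 ≤ d := by omega
      have hL : (durfeeSides L).length = (durfeeSides (L.drop d)).length + 1 := by
        rw [durfeeSides_cons (by omega), List.length_cons]
      have hdropb0 : L.drop b0 = P'.flatten := by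
        rw [hMeq, hb0def, List.drop_left]
      have hds : (L.drop b0).Pairwise (· ≥ ·) := hsort.drop
      have hdp : ∀ x ∈ L.drop b0, 1 ≤ x := fun x hx => hpos x (List.mem_of_mem_drop hx)
      have hdl : (L.drop b0).length ≤ n := by rw [List.length_drop]; omega
      have hBl : Blocks (L.drop b0) P'.length :=
        ⟨P', hdropb0.symm, rfl, fun C hC => hok C (by simp [hC])⟩
      have h1 : (durfeeSides (L.drop b0)).length ≤ P'.length := ih _ hdl hds hdp _ hBl
      have hdd : L.drop d = (L.drop b0).drop (d - b0) := by
        rw [List.drop_drop]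
        congr 1
        omega
      have h2 : (durfeeSides (L.drop d)).length ≤ (durfeeSides (L.drop b0)).length := by
        rw [hdd]
        exact durfee_drop_le n (L.drop b0) hdl hds hdp (d - b0)
      have hk' : k = P'.length + 1 := by rw [List.length_cons] at hl; omega
      omega

/-- **Lemma 3.3.** Let `π` be a partition (with parts listed in weakly
increasing order `M`, all parts positive) with exactly `s` successive
lower-Durfee squares.  Then `π` has exactly `s` successive Durfee squares. -/
theorem lower_durfee_count_eq_durfee_count (M : List ℕ)
    (hsort : M.Pairwise (· ≤ ·)) (hpos : ∀ x ∈ M, 1 ≤ x) (s : ℕ)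
    (hs : (lowerSides M).length = s) :
    (durfeeSides M.reverse).length = s := by
  have hsortL : M.reverse.Pairwise (· ≥ ·) := List.pairwise_reverse.2 hsort
  have hposL : ∀ x ∈ M.reverse, 1 ≤ x := fun x hx => hpos x (List.mem_reverse.1 hx)
  have h1 : Blocks M (lowerSides M).length :=
    lower_blocks M.length M le_rfl hsort hpos
  have h2 : Blocks M.reverse (lowerSides M).length := blocks_reverse h1
  have h3 : (durfeeSides M.reverse).length ≤ (lowerSides M).length :=
    durfee_min M.reverse.length M.reverse le_rfl hsortL hposL _ h2
  have h4 : Blocks M.reverse (durfeeSides M.reverse).length :=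
    durfee_blocks M.reverse.length M.reverse le_rfl hsortL hposL
  have h5 : Blocks M (durfeeSides M.reverse).length := by
    have := blocks_reverse h4
    rwa [List.reverse_reverse] at this
  have h6 : (lowerSides M).length ≤ (durfeeSides M.reverse).length :=
    lower_min M.length M le_rfl hsort hpos _ h5
  omega
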